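/- Let G = (V,E) be a finite directed graph with |V| = n, let s, t ∈ V with s ≠ t, let λ > 0, and assign to each edge e the pair of weights w_e = (λn+1, 1) if e leaves s and w_e = (1,1) otherwise. Then every simple directed s–t path p satisfies l_1(p) = λn + hop(p) and l_2(p) = hop(p), where hop(p) is the number of edges of p and l_k(p) = Σ_{e∈p} w_{e,k}. Consequently, a simple s–t path p minimizes the cost-to-time ratio l_1(p)/l_2(p) over all simple s–t paths if and only if it maximizes hop(p) over all simple s–t paths. -/

import Mathlib

namespace Stmt5

variable {V : Type*}

/-- The list of edges of a walk, given as the list of its consecutive vertex pairs. -/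
def edgesOf (p : List V) : List (V × V) := p.zip p.tail

/-- `p` is a directed walk from `s` to `t` in the digraph with adjacency relation `Adj`:
its vertex list is nonempty, starts at `s`, ends at `t`, and consecutive vertices are
joined by edges. -/
def IsWalk (Adj : V → V → Prop) (s t : V) (p : List V) : Prop :=
  List.Chain' Adj p ∧ p.head? = some s ∧ p.getLast? = some t

/-- The number of hops (edges) of a walk. -/
def hop (p : List V) : ℕ := (edgesOf p).length

/-- The total weight `Σ_{e ∈ p} w_e` of a walk `p` under edge weights `w`. -/
def lw (w : V → V → ℝ) (p : List V) : ℝ := ((edgesOf p).map fun e => w e.1 e.2).sum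

lemma sum_map_const {α : Type*} (l : List α) (f : α → ℝ) (c : ℝ)
    (h : ∀ x ∈ l, f x = c) : (l.map f).sum = c * l.length := by
  induction l with
  | nil => simp
  | cons a l ih =>
    simp only [List.map_cons, List.sum_cons, List.length_cons]
    rw [h a (by simp), ih (fun x hx => h x (by simp [hx]))]
    push_cast; ring

lemma adj_of_mem_edgesOf {Adj : V → V → Prop} :
    ∀ {p : List V}, List.Chain' Adj p → ∀ e ∈ edgesOf p, Adj e.1 e.2 := by
  intro p
  induction p with
  | nil => intro _ e he; simp [edgesOf] at he
  | cons a l ih =>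
    cases l with
    | nil => intro _ e he; simp [edgesOf] at he
    | cons b m =>
      intro hc e he
      replace hc := List.isChain_cons_cons.mp hc
      simp only [edgesOf, List.tail_cons, List.zip_cons_cons, List.mem_cons] at he
      rcases he with rfl | he
      · exact hc.1
      · exact ih hc.2 e he

lemma fst_mem_of_mem_edgesOf {p : List V} {e : V × V} (he : e ∈ edgesOf p) : e.1 ∈ p := by
  obtain ⟨a, b⟩ := e
  exact (List.of_mem_zip he).1

lemma key [Fintype V] [DecidableEq V] (Adj : V → V → Prop) (s t : V) (hst : s ≠ t)
    (lam : ℝ) (w₁ w₂ : V → V → ℝ)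
    (hw₁ : ∀ u v, Adj u v →
      w₁ u v = if u = s then lam * (Fintype.card V : ℝ) + 1 else 1)
    (hw₂ : ∀ u v, Adj u v → w₂ u v = 1)
    (p : List V) (hp : IsWalk Adj s t p) (hnd : p.Nodup) :
    lw w₁ p = lam * (Fintype.card V : ℝ) + (hop p : ℝ) ∧ lw w₂ p = (hop p : ℝ) ∧ 1 ≤ hop p := by
  obtain ⟨hc, hh, hl⟩ := hp
  -- p = s :: q
  obtain ⟨q, rfl⟩ : ∃ q, p = s :: q := by
    cases p with
    | nil => simp at hh
    | cons a l => simp only [List.head?_cons, Option.some_inj] at hh; exact ⟨l, by rw [hh]⟩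
  -- q nonempty
  obtain ⟨b, m, rfl⟩ : ∃ b m, q = b :: m := by
    cases q with
    | nil => simp at hl; exact absurd hl hst
    | cons b m => exact ⟨b, m, rfl⟩
  have hs_not : s ∉ b :: m := (List.nodup_cons.mp hnd).1
  replace hc := List.isChain_cons_cons.mp hc
  have hedges : edgesOf (s :: b :: m) = (s, b) :: edgesOf (b :: m) := by
    simp [edgesOf]
  have hadj_tail : ∀ e ∈ edgesOf (b :: m), Adj e.1 e.2 := adj_of_mem_edgesOf hc.2
  have hw₁tail : ∀ e ∈ edgesOf (b :: m), w₁ e.1 e.2 = 1 := by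
    intro e he
    have h1 : e.1 ∈ b :: m := fst_mem_of_mem_edgesOf he
    rw [hw₁ _ _ (hadj_tail e he), if_neg]
    intro h; exact hs_not (h ▸ h1)
  have hhop : hop (s :: b :: m) = hop (b :: m) + 1 := by
    simp [hop, hedges]
  refine ⟨?_, ?_, ?_⟩
  · rw [lw, hedges, List.map_cons, List.sum_cons,
      sum_map_const _ _ 1 hw₁tail, hw₁ _ _ hc.1, if_pos rfl]
    push_cast [hop, hedges, List.length_cons]; ring
  · rw [lw, sum_map_const _ _ 1 (fun e he => hw₂ _ _ (adj_of_mem_edgesOf (by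
      exact List.isChain_cons_cons.mpr hc) e he))]
    push_cast [hop]; ring
  · rw [hhop]; omega

lemma ratio_mono (c h1 h2 : ℝ) (hc : 0 < c) (h1p : 1 ≤ h1) (h2p : 1 ≤ h2) :
    (c + h1) / h1 ≤ (c + h2) / h2 ↔ h2 ≤ h1 := by
  rw [div_le_div_iff₀ (by linarith) (by linarith)]
  constructor <;> intro h <;> nlinarith

/-- Correctness of the reduction from longest simple path to minimum cost-to-time ratio
simple path (Theorem 1): with weights `(λn+1, 1)` on edges leaving `s` and `(1,1)` elsewhere,
every simple `s–t` path `p` has `l₁(p) = λn + hop(p)` and `l₂(p) = hop(p)`; consequently a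
simple `s–t` path minimizes the ratio `l₁/l₂` iff it maximizes the number of hops. -/
theorem stmt_5 [Fintype V] [DecidableEq V] (Adj : V → V → Prop) (s t : V) (hst : s ≠ t)
    (lam : ℝ) (hlam : 0 < lam) (w₁ w₂ : V → V → ℝ)
    (hw₁ : ∀ u v, Adj u v →
      w₁ u v = if u = s then lam * (Fintype.card V : ℝ) + 1 else 1)
    (hw₂ : ∀ u v, Adj u v → w₂ u v = 1) :
    (∀ p : List V, IsWalk Adj s t p → p.Nodup →
      lw w₁ p = lam * (Fintype.card V : ℝ) + (hop p : ℝ) ∧ lw w₂ p = (hop p : ℝ)) ∧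
    (∀ p : List V, IsWalk Adj s t p → p.Nodup →
      ((∀ q : List V, IsWalk Adj s t q → q.Nodup →
          lw w₁ p / lw w₂ p ≤ lw w₁ q / lw w₂ q) ↔
       (∀ q : List V, IsWalk Adj s t q → q.Nodup → hop q ≤ hop p))) := by
  have hn : (0:ℝ) < lam * (Fintype.card V : ℝ) := by
    have : 0 < Fintype.card V := Fintype.card_pos_iff.mpr ⟨s⟩
    positivity
  have K := key Adj s t hst lam w₁ w₂ hw₁ hw₂
  constructor
  · intro p hp hnd
    exact ⟨(K p hp hnd).1, (K p hp hnd).2.1⟩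
  · intro p hp hnd
    obtain ⟨h1p, h2p, hhp⟩ := K p hp hnd
    constructor
    · intro H q hq hndq
      obtain ⟨h1q, h2q, hhq⟩ := K q hq hndq
      have := H q hq hndq
      rw [h1p, h2p, h1q, h2q, ratio_mono _ _ _ hn (by exact_mod_cast hhp) (by exact_mod_cast hhq)]
        at this
      exact_mod_cast this
    · intro H q hq hndq
      obtain ⟨h1q, h2q, hhq⟩ := K q hq hndq
      rw [h1p, h2p, h1q, h2q, ratio_mono _ _ _ hn (by exact_mod_cast hhp) (by exact_mod_cast hhq)]
      exact_mod_cast H q hq hndq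


end Stmt5
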